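/- The c.d.g.a. M = (Λ(A₁, x₁, y₁, z₁, p₁, q₁), D) with all generators of degree 1 and differential DA = Dx = Dy = Dz = 0, Dp = Ax, Dq = Ap is not formal: there is no c.d.g.a. morphism ψ: M → (H*(M), 0) inducing the identity on cohomology. In fact, any morphism ψ must send A, x, y, z to their cohomology classes and p, q to 0, but then ψ kills the nonzero cohomology class [Ap] ∈ H²(M). -/
import Mathlib


/-!
STATEMENT 16: The c.d.g.a. M = (Λ(A₁,x₁,y₁,z₁,p₁,q₁), D), free graded-commutative on
six generators of degree 1, with DA = Dx = Dy = Dz = 0, Dp = Ax, Dq = Ap, is not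
formal: there is no c.d.g.a. morphism ψ : M → (H*(M), 0) inducing the identity on
cohomology.

Since all generators have degree 1, M is the exterior algebra on six generators,
modeled concretely as below (generators 0↦A, 1↦x, 2↦y, 3↦z, 4↦p, 5↦q).  A morphism
ψ : M → (H*(M),0) inducing the identity on cohomology is represented by a linear
endomorphism ψ of M which: preserves degrees, is unital, kills exact elements and
composes to zero with D (so it is a chain map to the zero differential, well-defined
on cohomology), takes values in the closed elements, is multiplicative up to exact
terms (i.e. is multiplicative into H*(M)), and sends every closed element to an
element representing the same cohomology class.
-/

open Finset Module

/-- The exterior algebra on six degree-one generators α¹,…,α⁶, as coordinates on the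
basis of increasing wedge monomials indexed by subsets of `Fin 6`. -/
abbrev Lam : Type := Finset (Fin 6) → ℝ

/-- The basis monomial α^S. -/
noncomputable def gen (S : Finset (Fin 6)) : Lam := Pi.single S 1

/-- Koszul sign when interleaving (the increasing enumerations of) `T` and `U`:
(−1) to the number of inversions. -/
def koszulSign (T U : Finset (Fin 6)) : ℝ :=
  (-1 : ℝ) ^ (((T ×ˢ U).filter fun p => p.2 < p.1).card)

/-- The wedge (exterior) product in coordinates. -/
noncomputable def wedge (f h : Lam) : Lam := fun S =>
  ∑ T ∈ S.powerset, koszulSign T (S \ T) * f T * h (S \ T)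

/-- The Chevalley–Eilenberg differential: the unique antiderivation with dαⁱ = g i,
given on the basis monomial α^S by d α^S = Σ_{i ∈ S} (−1)^{#{j ∈ S | j < i}} (g i) ∧ α^{S∖i}. -/
noncomputable def ceDiff (g : Fin 6 → Lam) : Lam →ₗ[ℝ] Lam :=
  (Pi.basisFun ℝ (Finset (Fin 6))).constr ℝ fun S =>
    ∑ i ∈ S, ((-1 : ℝ) ^ ((S.filter fun j => j < i).card)) • wedge (g i) (gen (S.erase i))

/-- The subspace Λᵏ of homogeneous elements of degree `k`. -/
def degSub (k : ℕ) : Submodule ℝ Lam where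
  carrier := {f | ∀ S : Finset (Fin 6), S.card ≠ k → f S = 0}
  add_mem' := by
    intro f g hf hg S hS
    simp only [Pi.add_apply, hf S hS, hg S hS, add_zero]
  zero_mem' := by intro S hS; rfl
  smul_mem' := by
    intro c f hf S hS
    simp only [Pi.smul_apply, hf S hS, smul_zero]

/-- Closed k-forms. -/
noncomputable def Zspace (D : Lam →ₗ[ℝ] Lam) (k : ℕ) : Submodule ℝ Lam :=
  degSub k ⊓ LinearMap.ker D

/-- Exact k-forms (the image of the (k−1)-forms under the differential). -/
noncomputable def Bspace (D : Lam →ₗ[ℝ] Lam) (k : ℕ) : Submodule ℝ Lam :=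
  (degSub (k - 1)).map D

/-- DA = Dx = Dy = Dz = 0, Dp = A∧x, Dq = A∧p (0-indexed generators A,x,y,z,p,q). -/
noncomputable def gDiff : Fin 6 → Lam := ![0, 0, 0, 0, gen {0, 1}, gen {0, 4}]

noncomputable def D : Lam →ₗ[ℝ] Lam := ceDiff gDiff

-- auxiliary lemmas
lemma gen_apply (S T : Finset (Fin 6)) : gen S T = if T = S then 1 else 0 := by
  simp [gen, Pi.single_apply]

lemma expand (c : Lam) : c = ∑ S : Finset (Fin 6), c S • gen S := by
  funext T
  rw [Finset.sum_apply]
  simp only [Pi.smul_apply, gen_apply, smul_eq_mul, mul_ite, mul_one, mul_zero]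
  rw [Finset.sum_ite_eq Finset.univ T c]
  simp

lemma D_gen (S : Finset (Fin 6)) : D (gen S) =
    ∑ i ∈ S, ((-1 : ℝ) ^ ((S.filter fun j => j < i).card)) • wedge (gDiff i) (gen (S.erase i)) := by
  have h : gen S = (Pi.basisFun ℝ (Finset (Fin 6))) S := by
    funext T; simp [gen]
  rw [D, ceDiff, h, Basis.constr_basis]

lemma wedge_gen_gen (U V S : Finset (Fin 6)) :
    wedge (gen U) (gen V) S = if U ⊆ S ∧ S \ U = V then koszulSign U V else 0 := by
  by_cases hU : U ⊆ S
  · rw [wedge, Finset.sum_eq_single U]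
    · rw [gen_apply, gen_apply, if_pos rfl]
      by_cases hV : S \ U = V
      · simp [hV, hU]
      · simp [hV, hU]
    · intro T _ hT
      rw [gen_apply, if_neg hT]; ring
    · intro hmem; exact absurd (Finset.mem_powerset.mpr hU) hmem
  · rw [if_neg (fun hc => hU hc.1)]
    apply Finset.sum_eq_zero
    intro T hT
    rw [gen_apply, if_neg]
    · ring
    · rintro rfl; exact hU (Finset.mem_powerset.mp hT)

lemma gDiff_zero_of_subset14 (i : Fin 6) (T : Finset (Fin 6)) (h : T ⊆ ({1, 4} : Finset (Fin 6))) :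
    gDiff i T = 0 := by
  have h0 : (0 : Fin 6) ∉ T := fun hm => absurd (h hm) (by decide)
  have h1 : T ≠ ({0,1} : Finset (Fin 6)) := fun hc => h0 (hc ▸ (by decide))
  have h2 : T ≠ ({0,4} : Finset (Fin 6)) := fun hc => h0 (hc ▸ (by decide))
  fin_cases i
  · rfl
  · rfl
  · rfl
  · rfl
  · show gen {0,1} T = 0; rw [gen_apply, if_neg h1]
  · show gen {0,4} T = 0; rw [gen_apply, if_neg h2]

lemma wedge_gDiff_14 (i : Fin 6) (h : Lam) : wedge (gDiff i) h {1, 4} = 0 := by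
  apply Finset.sum_eq_zero
  intro T hT
  rw [gDiff_zero_of_subset14 i T (Finset.mem_powerset.mp hT)]
  ring

lemma D_apply_14 (f : Lam) : D f ({1, 4} : Finset (Fin 6)) = 0 := by
  conv_lhs => rw [expand f]
  rw [map_sum, Finset.sum_apply]
  apply Finset.sum_eq_zero
  intro S _
  rw [map_smul, Pi.smul_apply, D_gen, Finset.sum_apply]
  have : ∀ i ∈ S, (((-1 : ℝ) ^ ((S.filter fun j => j < i).card)) •
      wedge (gDiff i) (gen (S.erase i))) ({1,4} : Finset (Fin 6)) = 0 := by
    intro i _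
    rw [Pi.smul_apply, wedge_gDiff_14]
    simp
  rw [Finset.sum_congr rfl this]
  simp

lemma D_gen_singleton_apply (i : Fin 6) (S : Finset (Fin 6)) :
    D (gen {i}) S = gDiff i S := by
  rw [D_gen]
  rw [Finset.sum_singleton]
  have h1 : (({i} : Finset (Fin 6)).filter fun j => j < i).card = 0 := by
    simp [Finset.filter_singleton]
  rw [h1, Finset.erase_singleton]
  simp only [pow_zero, one_smul, Finset.sum_apply]
  -- wedge (gDiff i) (gen ∅) S = gDiff i S
  rw [wedge, Finset.sum_eq_single S]
  · rw [Finset.sdiff_self, gen_apply, if_pos rfl]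
    have : koszulSign S ∅ = 1 := by simp [koszulSign]
    rw [this]; ring
  · intro T hT hne
    rw [gen_apply, if_neg]
    · ring
    · intro hc
      exact hne (by
        have := Finset.sdiff_eq_empty_iff_subset.mp hc
        exact Finset.Subset.antisymm (Finset.mem_powerset.mp hT) this)
  · intro hmem; exact absurd (Finset.mem_powerset.mpr (Finset.Subset.refl S)) hmem

lemma closed_deg1_coeff4 (c : Lam) (h1 : c ∈ degSub 1) (h2 : D c = 0) : c {4} = 0 := by
  have key : D c ({0,1} : Finset (Fin 6)) = c {4} := by
    conv_lhs => rw [expand c]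
    rw [map_sum, Finset.sum_apply]
    rw [Finset.sum_eq_single ({4} : Finset (Fin 6))]
    · rw [map_smul, Pi.smul_apply]
      have : D (gen {4}) ({0,1} : Finset (Fin 6)) = 1 := by
        rw [D_gen_singleton_apply]
        show gen {0,1} {0,1} = 1
        rw [gen_apply, if_pos rfl]
      rw [this]; simp
    · intro S _ hne
      rw [map_smul, Pi.smul_apply, smul_eq_mul]
      by_cases hcard : S.card = 1
      · obtain ⟨i, rfl⟩ := Finset.card_eq_one.mp hcard
        rw [D_gen_singleton_apply]
        have : gDiff i ({0,1} : Finset (Fin 6)) = 0 := by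
          have hi : i ≠ 4 := fun hc => hne (by rw [hc])
          fin_cases i
          · rfl
          · rfl
          · rfl
          · rfl
          · exact absurd rfl hi
          · show gen {0,4} {0,1} = 0
            rw [gen_apply, if_neg (by decide)]
        rw [this, mul_zero]
      · rw [h1 S hcard, zero_mul]
    · intro hmem; exact absurd (Finset.mem_univ _) hmem
  rw [h2] at key
  exact key.symm

lemma wedge_x_p : wedge (gen {1}) (gen {4}) = gen ({1, 4} : Finset (Fin 6)) := by
  funext S
  rw [wedge_gen_gen, gen_apply]
  by_cases hS : S = ({1, 4} : Finset (Fin 6))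
  · subst hS
    rw [if_pos ⟨by decide, by decide⟩, if_pos rfl]
    have h0 : ((({1} ×ˢ {4} : Finset (Fin 6 × Fin 6))).filter fun p => p.2 < p.1).card = 0 := by
      decide
    rw [koszulSign, h0, pow_zero]
  · rw [if_neg hS, if_neg]
    rintro ⟨ha, hb⟩
    exact hS (by rw [← Finset.union_sdiff_of_subset ha, hb]; decide)

lemma wedge_zero_left (h : Lam) : wedge 0 h = 0 := by
  funext S
  apply Finset.sum_eq_zero
  intro T _
  show koszulSign T (S \ T) * (0 : ℝ) * h (S \ T) = 0
  ring

lemma D_gen14 : D (gen ({1, 4} : Finset (Fin 6))) = 0 := by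
  rw [D_gen]
  have h14 : ({1, 4} : Finset (Fin 6)) = insert 1 {4} := rfl
  rw [h14, Finset.sum_insert (by decide), Finset.sum_singleton]
  have e1 : (insert 1 {4} : Finset (Fin 6)).erase 1 = {4} := by decide
  have e4 : (insert 1 {4} : Finset (Fin 6)).erase 4 = {1} := by decide
  rw [e1, e4]
  have hg1 : gDiff 1 = 0 := rfl
  have hg4 : gDiff 4 = gen {0, 1} := rfl
  rw [hg1, hg4, wedge_zero_left]
  have : wedge (gen {0, 1}) (gen {1}) = 0 := by
    funext S
    rw [wedge_gen_gen, if_neg]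
    · rfl
    · rintro ⟨_, hb⟩
      have h1 : (1 : Fin 6) ∈ S \ ({0, 1} : Finset (Fin 6)) := by rw [hb]; decide
      exact (Finset.mem_sdiff.mp h1).2 (by decide)
  rw [this]
  simp

theorem not_formal :
    ¬ ∃ ψ : Lam →ₗ[ℝ] Lam,
        (∀ k, (degSub k).map ψ ≤ degSub k) ∧
        ψ (gen ∅) = gen ∅ ∧
        (∀ f, ψ (D f) = 0) ∧
        (∀ f, D (ψ f) = 0) ∧
        (∀ f h, ψ (wedge f h) - wedge (ψ f) (ψ h) ∈ LinearMap.range D) ∧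
        (∀ f, D f = 0 → ψ f - f ∈ LinearMap.range D) := by
  rintro ⟨ψ, hdeg, -, -, hDψ, hmul, hclosed⟩
  have hx1 : gen ({1} : Finset (Fin 6)) ∈ degSub 1 := by
    intro S hS
    rw [gen_apply, if_neg (fun hc => hS (by rw [hc]; rfl))]
  have hp1 : gen ({4} : Finset (Fin 6)) ∈ degSub 1 := by
    intro S hS
    rw [gen_apply, if_neg (fun hc => hS (by rw [hc]; rfl))]
  have hψx1 : ψ (gen {1}) ∈ degSub 1 := hdeg 1 ⟨_, hx1, rfl⟩
  have hψp1 : ψ (gen {4}) ∈ degSub 1 := hdeg 1 ⟨_, hp1, rfl⟩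
  have hψx4 : ψ (gen {1}) {4} = 0 := closed_deg1_coeff4 _ hψx1 (hDψ _)
  have hψp4 : ψ (gen {4}) {4} = 0 := closed_deg1_coeff4 _ hψp1 (hDψ _)
  -- ψ(x∧p) at {1,4} equals 1 since x∧p is closed and non-exact there
  have hclosed' : ψ (wedge (gen {1}) (gen {4})) - wedge (gen {1}) (gen {4}) ∈ LinearMap.range D := by
    apply hclosed
    rw [wedge_x_p]; exact D_gen14
  obtain ⟨f, hf⟩ := hclosed'
  have h1 : ψ (wedge (gen {1}) (gen {4})) ({1, 4} : Finset (Fin 6)) = 1 := by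
    have := congrFun hf ({1, 4} : Finset (Fin 6))
    rw [D_apply_14] at this
    have hxp : wedge (gen {1}) (gen {4}) ({1, 4} : Finset (Fin 6)) = 1 := by
      rw [wedge_x_p, gen_apply, if_pos rfl]
    have h2 := (Pi.sub_apply (ψ (wedge (gen {1}) (gen {4}))) (wedge (gen {1}) (gen {4}))
      ({1, 4} : Finset (Fin 6)))
    rw [← this] at h2
    rw [hxp] at h2
    linarith
  -- but ψ(x∧p) at {1,4} equals wedge (ψx) (ψp) at {1,4}, which is 0
  obtain ⟨g, hg⟩ := hmul (gen {1}) (gen {4})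
  have h2 : ψ (wedge (gen {1}) (gen {4})) ({1, 4} : Finset (Fin 6))
      = wedge (ψ (gen {1})) (ψ (gen {4})) ({1, 4} : Finset (Fin 6)) := by
    have := congrFun hg ({1, 4} : Finset (Fin 6))
    rw [D_apply_14] at this
    have h3 := (Pi.sub_apply (ψ (wedge (gen {1}) (gen {4})))
      (wedge (ψ (gen {1})) (ψ (gen {4}))) ({1, 4} : Finset (Fin 6)))
    rw [← this] at h3
    linarith
  have h3 : wedge (ψ (gen {1})) (ψ (gen {4})) ({1, 4} : Finset (Fin 6)) = 0 := by
    apply Finset.sum_eq_zero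
    intro T hT
    have hTsub := Finset.mem_powerset.mp hT
    by_cases hc : T.card = 1
    · obtain ⟨t, rfl⟩ := Finset.card_eq_one.mp hc
      have ht := hTsub (Finset.mem_singleton_self t)
      have : t = 1 ∨ t = 4 := by
        rcases Finset.mem_insert.mp ht with h | h
        · exact Or.inl h
        · exact Or.inr (Finset.mem_singleton.mp h)
      rcases this with rfl | rfl
      · have hd : ({1, 4} : Finset (Fin 6)) \ {1} = {4} := by decide
        rw [hd, hψp4]; ring
      · rw [hψx4]; ring
    · rw [hψx1 T hc]; ring
  rw [h1, h3] at h2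
  norm_num at h2
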